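/- For constants C > 0, c > 0, ε > 0 and ℓ ≥ 1 a natural number, the double integral ∫₀^c ∫_{−ε}^{ε} e^{−C t φ^{2ℓ} s²} dφ · s ds is bounded by K t^{−1/(2ℓ)} for all t ≥ 1, for some constant K depending only on C, c, ε, ℓ. -/

import Mathlib

open intervalIntegral Real

/-- Core estimate: `∫_{-ε}^{ε} e^{-a φ^{2ℓ}} dφ ≤ 4 a^{-1/(2ℓ)}` for `a > 0`. -/
lemma inner_exp_bound (a ε : ℝ) (ha : 0 < a) (hε : 0 < ε) (ℓ : ℕ) (hℓ : 1 ≤ ℓ) :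
    ∫ φ in (-ε)..ε, Real.exp (-(a * φ ^ (2 * ℓ))) ≤ 4 * a ^ (-(1 : ℝ) / (2 * ℓ)) := by
  set q : ℝ := -(1 : ℝ) / (2 * ℓ) with hq
  set δ : ℝ := a ^ q with hδdef
  have hℓ0 : (0:ℝ) < 2 * ℓ := by positivity
  have hδ : 0 < δ := Real.rpow_pos_of_pos ha q
  have hkey : a * δ ^ (2 * ℓ) = 1 := by
    have : δ ^ (2 * ℓ) = a ^ ((-1 : ℝ)) := by
      rw [hδdef, ← Real.rpow_natCast (a ^ q) (2 * ℓ), ← Real.rpow_mul ha.le]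
      congr 1
      push_cast
      field_simp [hq]
      rw [hq]; field_simp
    rw [this, Real.rpow_neg_one]
    field_simp
  have hcont : Continuous fun φ : ℝ => Real.exp (-(a * φ ^ (2 * ℓ))) := by continuity
  have hint : ∀ u v : ℝ, IntervalIntegrable (fun φ : ℝ => Real.exp (-(a * φ ^ (2 * ℓ)))) MeasureTheory.volume u v :=
    fun u v => hcont.intervalIntegrable u v
  have hone : ∀ φ : ℝ, Real.exp (-(a * φ ^ (2 * ℓ))) ≤ 1 := by
    intro φ
    rw [Real.exp_le_one_iff]
    have h0 : (0:ℝ) ≤ φ ^ (2 * ℓ) := by rw [pow_mul]; positivity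
    nlinarith
  by_cases hcase : ε ≤ δ
  · -- integral ≤ 2ε ≤ 2δ ≤ 4δ
    have h1 : ∫ φ in (-ε)..ε, Real.exp (-(a * φ ^ (2 * ℓ))) ≤ ∫ φ in (-ε)..ε, (1:ℝ) := by
      apply intervalIntegral.integral_mono_on (by linarith) (hint _ _) (intervalIntegrable_const)
      intro x _; exact hone x
    rw [intervalIntegral.integral_const] at h1
    simp at h1
    nlinarith
  · push_neg at hcase
    -- split into three pieces
    have hsplit : ∫ φ in (-ε)..ε, Real.exp (-(a * φ ^ (2 * ℓ)))
        = (∫ φ in (-ε)..(-δ), Real.exp (-(a * φ ^ (2 * ℓ))))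
        + (∫ φ in (-δ)..δ, Real.exp (-(a * φ ^ (2 * ℓ))))
        + (∫ φ in δ..ε, Real.exp (-(a * φ ^ (2 * ℓ)))) := by
      rw [intervalIntegral.integral_add_adjacent_intervals (hint _ _) (hint _ _),
        intervalIntegral.integral_add_adjacent_intervals (hint _ _) (hint _ _)]
    -- middle piece
    have hmid : ∫ φ in (-δ)..δ, Real.exp (-(a * φ ^ (2 * ℓ))) ≤ 2 * δ := by
      have h1 : ∫ φ in (-δ)..δ, Real.exp (-(a * φ ^ (2 * ℓ))) ≤ ∫ φ in (-δ)..δ, (1:ℝ) := by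
        apply intervalIntegral.integral_mono_on (by linarith) (hint _ _) (intervalIntegrable_const)
        intro x _; exact hone x
      rw [intervalIntegral.integral_const] at h1
      simp at h1
      linarith
    -- right tail
    have htail : ∫ φ in δ..ε, Real.exp (-(a * φ ^ (2 * ℓ))) ≤ δ := by
      have hzint : IntervalIntegrable (fun φ : ℝ => (a * δ ^ (2 * ℓ - 2))⁻¹ * φ ^ (-2 : ℤ)) MeasureTheory.volume δ ε := by
        apply IntervalIntegrable.const_mul
        apply intervalIntegral.intervalIntegrable_zpow
        right
        rw [Set.uIcc_of_le hcase.le]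
        intro h; exact absurd (Set.mem_Icc.mp h).1 (by linarith)
      have hBound : ∀ φ ∈ Set.Icc δ ε, Real.exp (-(a * φ ^ (2 * ℓ)))
          ≤ (a * δ ^ (2 * ℓ - 2))⁻¹ * φ ^ (-2 : ℤ) := by
        intro φ hφ
        obtain ⟨h1, h2⟩ := hφ
        have hφ0 : 0 < φ := lt_of_lt_of_le hδ h1
        have hpow : δ ^ (2 * ℓ - 2) * φ ^ 2 ≤ φ ^ (2 * ℓ) := by
          have : δ ^ (2 * ℓ - 2) ≤ φ ^ (2 * ℓ - 2) := pow_le_pow_left₀ hδ.le h1 _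
          calc δ ^ (2 * ℓ - 2) * φ ^ 2 ≤ φ ^ (2 * ℓ - 2) * φ ^ 2 := by nlinarith [sq_nonneg φ]
            _ = φ ^ (2 * ℓ) := by rw [← pow_add]; congr 1; omega
        have hx : 0 < a * (δ ^ (2 * ℓ - 2) * φ ^ 2) := by positivity
        have hexp : Real.exp (-(a * φ ^ (2 * ℓ))) ≤ (a * (δ ^ (2 * ℓ - 2) * φ ^ 2))⁻¹ := by
          have h3 : Real.exp (-(a * φ ^ (2 * ℓ))) ≤ Real.exp (-(a * (δ ^ (2 * ℓ - 2) * φ ^ 2))) := by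
            apply Real.exp_le_exp.mpr
            nlinarith
          have h4 : a * (δ ^ (2 * ℓ - 2) * φ ^ 2) < Real.exp (a * (δ ^ (2 * ℓ - 2) * φ ^ 2)) :=
            lt_of_lt_of_le (by linarith [hx]) (Real.add_one_le_exp _)
          calc Real.exp (-(a * φ ^ (2 * ℓ))) ≤ Real.exp (-(a * (δ ^ (2 * ℓ - 2) * φ ^ 2))) := h3
            _ = (Real.exp (a * (δ ^ (2 * ℓ - 2) * φ ^ 2)))⁻¹ := by rw [← Real.exp_neg]
            _ ≤ (a * (δ ^ (2 * ℓ - 2) * φ ^ 2))⁻¹ := by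
                apply inv_anti₀ hx h4.le
        calc Real.exp (-(a * φ ^ (2 * ℓ))) ≤ (a * (δ ^ (2 * ℓ - 2) * φ ^ 2))⁻¹ := hexp
          _ = (a * δ ^ (2 * ℓ - 2))⁻¹ * φ ^ (-2 : ℤ) := by
              rw [zpow_neg, ← mul_inv, mul_assoc]
              norm_num
      have h1 : ∫ φ in δ..ε, Real.exp (-(a * φ ^ (2 * ℓ)))
          ≤ ∫ φ in δ..ε, (a * δ ^ (2 * ℓ - 2))⁻¹ * φ ^ (-2 : ℤ) := by
        apply intervalIntegral.integral_mono_on hcase.le (hint _ _) hzint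
        intro x hx; exact hBound x hx
      have h2 : ∫ φ in δ..ε, (a * δ ^ (2 * ℓ - 2))⁻¹ * φ ^ (-2 : ℤ)
          = (a * δ ^ (2 * ℓ - 2))⁻¹ * (δ⁻¹ - ε⁻¹) := by
        rw [intervalIntegral.integral_const_mul, integral_zpow]
        · norm_num
          left; ring
        · right
          constructor
          · norm_num
          · rw [Set.uIcc_of_le hcase.le]
            intro h; exact absurd (Set.mem_Icc.mp h).1 (by linarith)
      have h3 : (a * δ ^ (2 * ℓ - 2))⁻¹ * (δ⁻¹ - ε⁻¹) ≤ δ := by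
        have he : (a * δ ^ (2 * ℓ - 2))⁻¹ * δ⁻¹ = δ := by
          rw [← mul_inv]
          rw [show a * δ ^ (2 * ℓ - 2) * δ = a * δ ^ (2 * ℓ - 1) by
            rw [mul_assoc, ← pow_succ]; congr 2; omega]
          rw [show a * δ ^ (2 * ℓ - 1) = (a * δ ^ (2 * ℓ)) / δ by
            rw [mul_div_assoc]; congr 1
            rw [eq_div_iff hδ.ne', ← pow_succ]; congr 1; omega]
          rw [hkey]
          simp
        have : (0:ℝ) < (a * δ ^ (2 * ℓ - 2))⁻¹ := by positivity
        nlinarith [inv_pos.mpr hε, inv_pos.mpr hδ]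
      linarith
    -- left tail by symmetry
    have hltail : ∫ φ in (-ε)..(-δ), Real.exp (-(a * φ ^ (2 * ℓ))) ≤ δ := by
      have : ∫ φ in (-ε)..(-δ), Real.exp (-(a * φ ^ (2 * ℓ)))
          = ∫ φ in δ..ε, Real.exp (-(a * φ ^ (2 * ℓ))) := by
        rw [← intervalIntegral.integral_comp_neg (fun φ => Real.exp (-(a * φ ^ (2 * ℓ))))]
        congr 1
        ext φ
        congr 2
        rw [neg_pow]
        simp [pow_mul]
      rw [this]; exact htail
    rw [hsplit]
    linarith

/-- The integral estimate
`∫₀^c ∫_{−ε}^{ε} e^{−Ctφ^{2ℓ}s²} dφ · s ds ≤ K t^{−1/(2ℓ)}` for all `t ≥ 1`. -/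
theorem hyperbolic_integral_decay
    (C c ε : ℝ) (hC : 0 < C) (hc : 0 < c) (hε : 0 < ε)
    (ℓ : ℕ) (hℓ : 1 ≤ ℓ) :
    ∃ K : ℝ, ∀ t : ℝ, 1 ≤ t →
      ∫ s in (0 : ℝ)..c,
          (∫ φ in (-ε : ℝ)..ε, Real.exp (-C * t * φ ^ (2 * ℓ) * s ^ 2)) * s ≤
        K * t ^ (-(1 : ℝ) / (2 * ℓ)) := by
  set q : ℝ := -(1 : ℝ) / (2 * ℓ) with hq
  have hℓR : (1:ℝ) ≤ (ℓ:ℝ) := by exact_mod_cast hℓ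
  have h2ℓ : (2:ℝ) ≤ 2 * ℓ := by linarith
  have hqe : q * (2 * ℓ) = -1 := by rw [hq]; field_simp
  have hq0 : q < 0 := by
    rw [hq]; exact div_neg_of_neg_of_pos (by norm_num) (by positivity)
  have hp0 : (0:ℝ) ≤ 2 * q + 1 := by
    nlinarith [mul_le_mul_of_nonpos_left h2ℓ hq0.le]
  set p : ℝ := 2 * q + 1 with hp
  have hp1 : (0:ℝ) < p + 1 := by linarith
  refine ⟨4 * C ^ q * (c ^ (p + 1) / (p + 1)), fun t ht => ?_⟩
  have ht0 : (0:ℝ) < t := by linarith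
  -- RHS integrand coefficient
  set M : ℝ := 4 * C ^ q * t ^ q with hM
  have hM0 : 0 ≤ M := by
    have := Real.rpow_nonneg hC.le q
    have := Real.rpow_nonneg ht0.le q
    positivity
  -- monotonicity
  have hmono : ∫ s in (0:ℝ)..c,
        (∫ φ in (-ε:ℝ)..ε, Real.exp (-C * t * φ ^ (2 * ℓ) * s ^ 2)) * s
      ≤ ∫ s in (0:ℝ)..c, M * s ^ p := by
    apply intervalIntegral.integral_mono_on hc.le
    · -- integrability of LHS
      have hcF : Continuous (Function.uncurry fun s φ : ℝ =>
          Real.exp (-C * t * φ ^ (2 * ℓ) * s ^ 2)) := by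
        apply Real.continuous_exp.comp
        fun_prop
      exact ((intervalIntegral.continuous_parametric_intervalIntegral_of_continuous'
        hcF (-ε) ε).mul continuous_id).intervalIntegrable 0 c
    · exact (intervalIntegral.intervalIntegrable_rpow' (by linarith)).const_mul M
    · intro s hs
      obtain ⟨hs0, hsc⟩ := hs
      rcases eq_or_lt_of_le hs0 with h0 | h0
      · subst h0
        simp
        positivity
      · -- s > 0
        have ha : 0 < C * t * s ^ 2 := by positivity
        have hrw : (fun φ : ℝ => Real.exp (-C * t * φ ^ (2 * ℓ) * s ^ 2))
            = fun φ : ℝ => Real.exp (-(C * t * s ^ 2 * φ ^ (2 * ℓ))) := by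
          funext φ; congr 1; ring
        have hb := inner_exp_bound (C * t * s ^ 2) ε ha hε ℓ hℓ
        have hb2 : (∫ φ in (-ε:ℝ)..ε, Real.exp (-C * t * φ ^ (2 * ℓ) * s ^ 2))
            ≤ 4 * (C * t * s ^ 2) ^ q := by rw [hrw]; exact hb
        have h1 : ((s ^ 2 : ℝ)) ^ q = s ^ (2 * q) := by
          rw [← Real.rpow_natCast s 2, ← Real.rpow_mul h0.le]
          norm_num
        have h2 : s ^ p = s ^ (2 * q) * s := by
          rw [hp, Real.rpow_add_one h0.ne']
        have hps : (C * t * s ^ 2) ^ q * s = C ^ q * t ^ q * s ^ p := by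
          calc (C * t * s ^ 2) ^ q * s
              = (C ^ q * t ^ q * (s ^ 2) ^ q) * s := by
                rw [Real.mul_rpow (by positivity) (by positivity),
                  Real.mul_rpow hC.le ht0.le]
            _ = C ^ q * t ^ q * (s ^ (2 * q) * s) := by rw [h1]; ring
            _ = C ^ q * t ^ q * s ^ p := by rw [h2]
        calc (∫ φ in (-ε:ℝ)..ε, Real.exp (-C * t * φ ^ (2 * ℓ) * s ^ 2)) * s
            ≤ (4 * (C * t * s ^ 2) ^ q) * s := by
              apply mul_le_mul_of_nonneg_right hb2 h0.le
          _ = M * s ^ p := by rw [hM, mul_assoc 4, hps]; ring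
  -- compute RHS integral
  have hcomp : ∫ s in (0:ℝ)..c, M * s ^ p
      = M * (c ^ (p + 1) / (p + 1)) := by
    rw [intervalIntegral.integral_const_mul, integral_rpow (Or.inl (by linarith))]
    rw [Real.zero_rpow (by linarith)]
    ring_nf
  calc _ ≤ ∫ s in (0:ℝ)..c, M * s ^ p := hmono
    _ = M * (c ^ (p + 1) / (p + 1)) := hcomp
    _ = 4 * C ^ q * (c ^ (p + 1) / (p + 1)) * t ^ q := by rw [hM]; ring
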